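/- Let S denote the unilateral shift on ℓ²(ℕ), and for each n ≥ 1 let T_n be the operator on the Hilbert space H = ℓ²(ℕ) ⊕ (⊕_{j=1}^∞ ℓ²(ℕ)) ⊕ (⊕_{j=1}^∞ ℓ²(ℕ)) given by T_n = (n/(n+1)) S ⊕ (⊕_{j=1, j≠n}^∞ (j/(j+1)) S) ⊕ (⊕_{j=1}^∞ (j/(j+1)) S*). Then T_n is unitarily equivalent to ⊕_{j=1}^∞ (j/(j+1))(S ⊕ S*), and hence T_n is complex symmetric. -/

import Mathlib

open Filter ContinuousLinearMap

noncomputable section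

/-- A conjugation on a complex Hilbert space `H` is a conjugate-linear, isometric
involution `C : H → H`. -/
def IsConjugation {H : Type*} [NormedAddCommGroup H] [InnerProductSpace ℂ H]
    (C : H → H) : Prop :=
  (∀ x y : H, C (x + y) = C x + C y) ∧
  (∀ (a : ℂ) (x : H), C (a • x) = (starRingEnd ℂ) a • C x) ∧
  (∀ x : H, ‖C x‖ = ‖x‖) ∧
  (∀ x : H, C (C x) = x)

/-- A bounded operator `T` on a complex Hilbert space is complex symmetric if there is a
conjugation `C` with `T = C T* C`. -/
def IsComplexSymmetric {H : Type*} [NormedAddCommGroup H] [InnerProductSpace ℂ H]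
    [CompleteSpace H] (T : H →L[ℂ] H) : Prop :=
  ∃ C : H → H, IsConjugation C ∧
    ∀ x : H, T x = C (ContinuousLinearMap.adjoint T (C x))

/-- `ℓ²(ℕ)` over `ℂ`. -/
abbrev ellTwo : Type := lp (fun _ : ℕ => ℂ) 2

/-- `S` is the unilateral shift on `ℓ²(ℕ)`: `S (a₀, a₁, a₂, …) = (0, a₀, a₁, …)`. -/
def IsUnilateralShift (S : ellTwo →L[ℂ] ellTwo) : Prop :=
  ∀ a : ellTwo, S a 0 = 0 ∧ ∀ n : ℕ, S a (n + 1) = a n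

/-- The coefficient `j/(j+1)`. -/
def coeff (j : ℕ+) : ℝ := (j : ℝ) / ((j : ℝ) + 1)

namespace TnAux

open scoped ENNReal

local notation "⟪" x ", " y "⟫" => @inner ℂ _ _ x y

set_option maxHeartbeats 1000000
set_option synthInstance.maxHeartbeats 1000000


open scoped ENNReal


lemma summable_norm_sq {ι : Type*} {G : ι → Type*} [∀ i, NormedAddCommGroup (G i)]
    (f : lp G 2) : Summable fun i => ‖f i‖ ^ 2 := by
  have h := (memℓp_gen_iff (p := 2) (by norm_num)).1 (lp.memℓp f)
  refine h.congr fun i => ?_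
  norm_num

lemma memℓp_of_sq {ι : Type*} {G : ι → Type*} [∀ i, NormedAddCommGroup (G i)]
    {f : ∀ i, G i} (h : Summable fun i => ‖f i‖ ^ 2) : Memℓp f 2 := by
  apply memℓp_gen
  refine h.congr fun i => ?_
  norm_num

lemma summable_inner_aux {ι : Type*} {G : Type*} [NormedAddCommGroup G]
    [InnerProductSpace ℂ G] {f g : ι → G}
    (hf : Summable fun i => ‖f i‖ ^ 2) (hg : Summable fun i => ‖g i‖ ^ 2) :
    Summable fun i => ⟪f i, g i⟫ := by
  refine Summable.of_norm_bounded (((hf.add hg).div_const 2)) fun i => ?_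
  have h1 : ‖⟪f i, g i⟫‖ ≤ ‖f i‖ * ‖g i‖ := norm_inner_le_norm _ _
  nlinarith [norm_nonneg (f i), norm_nonneg (g i), sq_nonneg (‖f i‖ - ‖g i‖)]

lemma pnat_summable_split {M : Type*} [AddCommGroup M] [TopologicalSpace M]
    [IsTopologicalAddGroup M] (n : ℕ+) (f : ℕ+ → M) (g : {j : ℕ+ // j ≠ n} → M)
    (hg : Summable g) (hfg : ∀ j : {j : ℕ+ // j ≠ n}, f j = g j) :
    Summable f := by
  classical
  have h1 : Summable (fun j : {j : ℕ+ // j ≠ n} => f j) := hg.congr fun j => (hfg j).symm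
  have h2 : Summable (({j : ℕ+ | j ≠ n} : Set ℕ+).indicator f) :=
    summable_subtype_iff_indicator.mp h1
  have h3 : Summable (fun j : ℕ+ => if j = n then f n else 0) :=
    summable_of_ne_finset_zero (s := {n}) (fun b hb => if_neg (by simpa using hb))
  have h4 : f = (({j : ℕ+ | j ≠ n} : Set ℕ+).indicator f) + fun j => if j = n then f n else 0 := by
    funext j
    by_cases h : j = n
    · subst h
      simp [Set.indicator_apply]
    · simp [Set.indicator_apply, h]
  rw [h4]
  exact h2.add h3

lemma pnat_tsum_split {M : Type*} [AddCommGroup M] [TopologicalSpace M]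
    [IsTopologicalAddGroup M] [T2Space M] (n : ℕ+) (f : ℕ+ → M) (g : {j : ℕ+ // j ≠ n} → M)
    (hg : Summable g) (hfg : ∀ j : {j : ℕ+ // j ≠ n}, f j = g j) :
    ∑' j, f j = f n + ∑' j, g j := by
  classical
  have hf : Summable f := pnat_summable_split n f g hg hfg
  rw [Summable.tsum_eq_add_tsum_ite hf n]
  congr 1
  have h1 : ∑' (j : ({j : ℕ+ | j ≠ n} : Set ℕ+)), f j = ∑' j, g j := tsum_congr fun j => hfg ⟨j.1, j.2⟩
  rw [← h1, tsum_subtype]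
  refine tsum_congr fun j => ?_
  by_cases h : j = n <;> simp [Set.indicator_apply, h]





lemma innerJ1 (u v : ellTwo) : ⟪star u, v⟫ = ⟪star v, u⟫ := by
  rw [lp.inner_eq_tsum, lp.inner_eq_tsum]
  refine tsum_congr fun i => ?_
  simp [lp.star_apply, RCLike.inner_apply, RCLike.star_def, mul_comm]

lemma innerJ2 (u v : ellTwo) : ⟪star u, star v⟫ = ⟪v, u⟫ := by
  rw [lp.inner_eq_tsum, lp.inner_eq_tsum]
  refine tsum_congr fun i => ?_
  simp [lp.star_apply, RCLike.inner_apply, RCLike.star_def, mul_comm]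

lemma star_shift {S : ellTwo →L[ℂ] ellTwo} (hS : IsUnilateralShift S) (a : ellTwo) :
    S (star a) = star (S a) := by
  apply lp.ext
  funext k
  cases k with
  | zero => rw [(hS (star a)).1, lp.star_apply, (hS a).1, star_zero]
  | succ m => rw [(hS (star a)).2 m, lp.star_apply, lp.star_apply, (hS a).2 m]

lemma key_adj {S : ellTwo →L[ℂ] ellTwo} (hS : IsUnilateralShift S) (u v : ellTwo) :
    ⟪star u, ContinuousLinearMap.adjoint S v⟫ = ⟪star v, S u⟫ := by
  rw [ContinuousLinearMap.adjoint_inner_right, star_shift hS u, innerJ1]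

lemma isCS_of_sym {H : Type*} [NormedAddCommGroup H] [InnerProductSpace ℂ H] [CompleteSpace H]
    (T : H →L[ℂ] H) (C : H → H) (hCC : ∀ x, C (C x) = x)
    (hanti : ∀ x y, ⟪C x, C y⟫ = ⟪y, x⟫)
    (hsym : ∀ x y, ⟪C x, T y⟫ = ⟪C y, T x⟫) :
    ∀ x, T x = C (ContinuousLinearMap.adjoint T (C x)) := by
  intro x
  have h : ContinuousLinearMap.adjoint T (C x) = C (T x) := by
    refine ext_inner_right ℂ fun v => ?_
    rw [ContinuousLinearMap.adjoint_inner_left]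
    have h2 := hanti (T x) (C v)
    rw [hCC v] at h2
    rw [hsym x v, ← h2]
  rw [h, hCC]








variable (n : ℕ+)

abbrev Hsub : Type := lp (fun _ : {j : ℕ+ // j ≠ n} => ellTwo) 2
abbrev Hall : Type := lp (fun _ : ℕ+ => ellTwo) 2
abbrev Hbig : Type := WithLp 2 (ellTwo × WithLp 2 (Hsub n × Hall))
abbrev P : Type := WithLp 2 (ellTwo × ellTwo)
abbrev Htar : Type := lp (fun _ : ℕ+ => P) 2

def beta (x : Hbig n) (j : ℕ+) : ellTwo := if h : j = n then x.ofLp.1 else x.ofLp.2.ofLp.1 ⟨j, h⟩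

variable {n}

lemma beta_n (x : Hbig n) : beta n x n = x.ofLp.1 := dif_pos rfl

lemma beta_ne (x : Hbig n) (j : {j : ℕ+ // j ≠ n}) : beta n x j = x.ofLp.2.ofLp.1 j := dif_neg j.2

lemma summable_beta_sq (x : Hbig n) : Summable fun j => ‖beta n x j‖ ^ 2 :=
  pnat_summable_split n _ (fun j : {j : ℕ+ // j ≠ n} => ‖x.ofLp.2.ofLp.1 j‖ ^ 2)
    (summable_norm_sq x.ofLp.2.ofLp.1) (fun j => by rw [beta_ne])

lemma beta_add (x y : Hbig n) (j : ℕ+) :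
    beta n (x + y) j = beta n x j + beta n y j := by
  unfold beta
  by_cases h : j = n
  · simp [h]
  · simp only [dif_neg h]
    exact lp.coeFn_add x.ofLp.2.ofLp.1 y.ofLp.2.ofLp.1 ▸ rfl

lemma beta_smul (a : ℂ) (x : Hbig n) (j : ℕ+) :
    beta n (a • x) j = a • beta n x j := by
  unfold beta
  by_cases h : j = n
  · simp [h]
  · simp only [dif_neg h]
    exact lp.coeFn_smul a x.ofLp.2.ofLp.1 ▸ rfl

variable (n)

lemma memU (x : Hbig n) :
    Memℓp (E := fun _ : ℕ+ => P) (fun j => (WithLp.toLp 2 (beta n x j, x.ofLp.2.ofLp.2 j) : P)) 2 := by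
  apply memℓp_of_sq
  refine ((summable_beta_sq x).add (summable_norm_sq x.ofLp.2.ofLp.2)).congr fun j => ?_
  exact (WithLp.prod_norm_sq_eq_of_L2 (WithLp.toLp 2 (beta n x j, x.ofLp.2.ofLp.2 j) : P)).symm

def Umap (x : Hbig n) : Htar :=
  ⟨fun j => (WithLp.toLp 2 (beta n x j, x.ofLp.2.ofLp.2 j) : P), memU n x⟩

def Vmap (y : Htar) : Hbig n :=
  WithLp.toLp 2 ((y n).ofLp.1,
   WithLp.toLp 2 (⟨fun j => (y j.1).ofLp.1, by
      apply memℓp_of_sq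
      have h : Summable fun j : {j : ℕ+ // j ≠ n} => ‖y j.1‖ ^ 2 :=
        (summable_norm_sq y).comp_injective Subtype.val_injective
      refine h.of_nonneg_of_le (fun j => sq_nonneg _) fun j => ?_
      have h2 := WithLp.prod_norm_sq_eq_of_L2 (y j.1)
      rw [← WithLp.ofLp_fst, ← WithLp.ofLp_snd] at h2
      nlinarith [sq_nonneg ‖(y j.1).ofLp.2‖]⟩,
    ⟨fun j => (y j).ofLp.2, by
      apply memℓp_of_sq
      refine (summable_norm_sq y).of_nonneg_of_le (fun j => sq_nonneg _) fun j => ?_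
      have h2 := WithLp.prod_norm_sq_eq_of_L2 (y j)
      rw [← WithLp.ofLp_fst, ← WithLp.ofLp_snd] at h2
      nlinarith [sq_nonneg ‖(y j).ofLp.1‖]⟩))

lemma Umap_apply (x : Hbig n) (j : ℕ+) :
    (Umap n x) j = (WithLp.toLp 2 (beta n x j, x.ofLp.2.ofLp.2 j) : P) := rfl

variable {n}

lemma Hbig_ext {x y : Hbig n} (h1 : x.ofLp.1 = y.ofLp.1) (h2 : ∀ j, x.ofLp.2.ofLp.1 j = y.ofLp.2.ofLp.1 j)
    (h3 : ∀ j, x.ofLp.2.ofLp.2 j = y.ofLp.2.ofLp.2 j) : x = y :=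
  WithLp.ofLp_injective 2 (Prod.ext h1 (WithLp.ofLp_injective 2 (Prod.ext (lp.ext (funext h2)) (lp.ext (funext h3)))))

lemma P_ext {x y : P} (h1 : x.ofLp.1 = y.ofLp.1) (h2 : x.ofLp.2 = y.ofLp.2) : x = y :=
  WithLp.ofLp_injective 2 (Prod.ext h1 h2)

variable (n)

lemma U_left_inv (x : Hbig n) : Vmap n (Umap n x) = x := by
  refine Hbig_ext ?_ (fun j => ?_) (fun j => ?_)
  · exact beta_n x
  · exact beta_ne x j
  · rfl

lemma U_right_inv (y : Htar) : Umap n (Vmap n y) = y := by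
  apply lp.ext
  funext j
  refine P_ext ?_ rfl
  show beta n (Vmap n y) j = (y j).ofLp.1
  unfold beta Vmap
  rcases eq_or_ne j n with h | h
  · subst h; rw [dif_pos rfl]
  · rw [dif_neg h]

lemma U_map_add (x y : Hbig n) : Umap n (x + y) = Umap n x + Umap n y := by
  apply lp.ext
  rw [lp.coeFn_add]
  funext j
  rw [Pi.add_apply, Umap_apply, Umap_apply, Umap_apply]
  refine P_ext ?_ ?_
  · exact beta_add x y j
  · show (x + y).ofLp.2.ofLp.2 j = x.ofLp.2.ofLp.2 j + y.ofLp.2.ofLp.2 j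
    exact lp.coeFn_add x.ofLp.2.ofLp.2 y.ofLp.2.ofLp.2 ▸ rfl

lemma U_map_smul (a : ℂ) (x : Hbig n) : Umap n (a • x) = a • Umap n x := by
  apply lp.ext
  rw [lp.coeFn_smul]
  funext j
  rw [Pi.smul_apply, Umap_apply, Umap_apply]
  refine P_ext ?_ ?_
  · exact beta_smul a x j
  · show (a • x).ofLp.2.ofLp.2 j = a • (x.ofLp.2.ofLp.2 j)
    exact lp.coeFn_smul a x.ofLp.2.ofLp.2 ▸ rfl

lemma Uinner (x y : Hbig n) : ⟪Umap n x, Umap n y⟫ = ⟪x, y⟫ := by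
  have hb : Summable (fun j : ℕ+ => ⟪beta n x j, beta n y j⟫) :=
    pnat_summable_split n _ (fun j : {j : ℕ+ // j ≠ n} => ⟪x.ofLp.2.ofLp.1 j, y.ofLp.2.ofLp.1 j⟫)
      (lp.summable_inner x.ofLp.2.ofLp.1 y.ofLp.2.ofLp.1) (fun j => by
        show ⟪beta n x j, beta n y j⟫ = ⟪x.ofLp.2.ofLp.1 j, y.ofLp.2.ofLp.1 j⟫
        rw [beta_ne, beta_ne])
  have hsplit := pnat_tsum_split n (fun j => ⟪beta n x j, beta n y j⟫)
      (fun j : {j : ℕ+ // j ≠ n} => ⟪x.ofLp.2.ofLp.1 j, y.ofLp.2.ofLp.1 j⟫)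
      (lp.summable_inner x.ofLp.2.ofLp.1 y.ofLp.2.ofLp.1) (fun j => by
        show ⟪beta n x j, beta n y j⟫ = ⟪x.ofLp.2.ofLp.1 j, y.ofLp.2.ofLp.1 j⟫
        rw [beta_ne, beta_ne])
  calc ⟪Umap n x, Umap n y⟫
      = ∑' j : ℕ+, ⟪Umap n x j, Umap n y j⟫ := lp.inner_eq_tsum _ _
    _ = ∑' j : ℕ+, (⟪beta n x j, beta n y j⟫ + ⟪x.ofLp.2.ofLp.2 j, y.ofLp.2.ofLp.2 j⟫) :=
        tsum_congr fun j => WithLp.prod_inner_apply _ _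
    _ = (∑' j : ℕ+, ⟪beta n x j, beta n y j⟫) + ∑' j : ℕ+, ⟪x.ofLp.2.ofLp.2 j, y.ofLp.2.ofLp.2 j⟫ :=
        Summable.tsum_add hb (lp.summable_inner x.ofLp.2.ofLp.2 y.ofLp.2.ofLp.2)
    _ = (⟪x.ofLp.1, y.ofLp.1⟫ + ∑' j : {j : ℕ+ // j ≠ n}, ⟪x.ofLp.2.ofLp.1 j, y.ofLp.2.ofLp.1 j⟫)
          + ∑' j : ℕ+, ⟪x.ofLp.2.ofLp.2 j, y.ofLp.2.ofLp.2 j⟫ := by rw [hsplit]; simp only [beta_n]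
    _ = ⟪x.ofLp.1, y.ofLp.1⟫ + (⟪x.ofLp.2.ofLp.1, y.ofLp.2.ofLp.1⟫ + ⟪x.ofLp.2.ofLp.2, y.ofLp.2.ofLp.2⟫) := by
        rw [← lp.inner_eq_tsum, ← lp.inner_eq_tsum]; ring
    _ = ⟪x, y⟫ := by rw [WithLp.prod_inner_apply, WithLp.prod_inner_apply]

def Ueq : Hbig n ≃ₗ[ℂ] Htar where
  toFun := Umap n
  invFun := Vmap n
  left_inv := U_left_inv n
  right_inv := U_right_inv n
  map_add' := U_map_add n
  map_smul' := U_map_smul n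

def Uiso : Hbig n ≃ₗᵢ[ℂ] Htar := (Ueq n).isometryOfInner (Uinner n)

lemma lp_add_apply {ι : Type*} {G : ι → Type*} [∀ i, NormedAddCommGroup (G i)] {p : ℝ≥0∞}
    (f g : lp G p) (i : ι) : (f + g) i = f i + g i := by rw [lp.coeFn_add]; rfl

lemma lp_smul_apply {ι : Type*} {G : ι → Type*} [∀ i, NormedAddCommGroup (G i)] {p : ℝ≥0∞}
    [∀ i, NormedSpace ℂ (G i)] (a : ℂ) (f : lp G p) (i : ι) : (a • f) i = a • f i := by
  rw [lp.coeFn_smul]; rfl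

variable {n}

def Cmap (x : Hbig n) : Hbig n :=
  WithLp.toLp 2 (star (x.ofLp.2.ofLp.2 n),
   WithLp.toLp 2 (⟨fun j => star (x.ofLp.2.ofLp.2 j.1), by
      apply memℓp_of_sq
      have h : Summable fun j : {j : ℕ+ // j ≠ n} => ‖x.ofLp.2.ofLp.2 j.1‖ ^ 2 :=
        (summable_norm_sq x.ofLp.2.ofLp.2).comp_injective Subtype.val_injective
      refine h.congr fun j => ?_
      rw [norm_star]⟩,
    ⟨fun j => star (beta n x j), by
      apply memℓp_of_sq
      refine (summable_beta_sq x).congr fun j => ?_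
      rw [norm_star]⟩))

lemma Cmap_fst (x : Hbig n) : (Cmap x).ofLp.1 = star (x.ofLp.2.ofLp.2 n) := rfl
lemma Cmap_sub (x : Hbig n) (j : {j : ℕ+ // j ≠ n}) : (Cmap x).ofLp.2.ofLp.1 j = star (x.ofLp.2.ofLp.2 j.1) := rfl
lemma Cmap_all (x : Hbig n) (j : ℕ+) : (Cmap x).ofLp.2.ofLp.2 j = star (beta n x j) := rfl

lemma Cmap_add (x y : Hbig n) : Cmap (x + y) = Cmap x + Cmap y := by
  refine Hbig_ext ?_ (fun j => ?_) (fun j => ?_)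
  · show star ((x + y).ofLp.2.ofLp.2 n) = star (x.ofLp.2.ofLp.2 n) + star (y.ofLp.2.ofLp.2 n)
    rw [show (x + y).ofLp.2.ofLp.2 = x.ofLp.2.ofLp.2 + y.ofLp.2.ofLp.2 from rfl, lp_add_apply, star_add]
  · show star ((x + y).ofLp.2.ofLp.2 j.1) = ((Cmap x).ofLp.2.ofLp.1 + (Cmap y).ofLp.2.ofLp.1) j
    rw [show (x + y).ofLp.2.ofLp.2 = x.ofLp.2.ofLp.2 + y.ofLp.2.ofLp.2 from rfl, lp_add_apply, star_add, lp_add_apply]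
    rfl
  · show star (beta n (x + y) j) = ((Cmap x).ofLp.2.ofLp.2 + (Cmap y).ofLp.2.ofLp.2) j
    rw [beta_add, star_add, lp_add_apply]
    rfl

lemma Cmap_smul (a : ℂ) (x : Hbig n) : Cmap (a • x) = (starRingEnd ℂ) a • Cmap x := by
  refine Hbig_ext ?_ (fun j => ?_) (fun j => ?_)
  · show star ((a • x).ofLp.2.ofLp.2 n) = (starRingEnd ℂ) a • star (x.ofLp.2.ofLp.2 n)
    rw [show (a • x).ofLp.2.ofLp.2 = a • x.ofLp.2.ofLp.2 from rfl, lp_smul_apply, star_smul, starRingEnd_apply]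
  · show star ((a • x).ofLp.2.ofLp.2 j.1) = ((starRingEnd ℂ) a • (Cmap x).ofLp.2.ofLp.1) j
    rw [show (a • x).ofLp.2.ofLp.2 = a • x.ofLp.2.ofLp.2 from rfl, lp_smul_apply, star_smul, lp_smul_apply,
      starRingEnd_apply]
    rfl
  · show star (beta n (a • x) j) = ((starRingEnd ℂ) a • (Cmap x).ofLp.2.ofLp.2) j
    rw [beta_smul, star_smul, lp_smul_apply, starRingEnd_apply]
    rfl

lemma Cmap_invol (x : Hbig n) : Cmap (Cmap x) = x := by
  refine Hbig_ext ?_ (fun j => ?_) (fun j => ?_)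
  · show star ((Cmap x).ofLp.2.ofLp.2 n) = x.ofLp.1
    rw [Cmap_all, star_star, beta_n]
  · show star ((Cmap x).ofLp.2.ofLp.2 j.1) = x.ofLp.2.ofLp.1 j
    rw [Cmap_all, star_star, beta_ne]
  · show star (beta n (Cmap x) j) = x.ofLp.2.ofLp.2 j
    unfold beta
    rcases eq_or_ne j n with h | h
    · subst h; rw [dif_pos rfl, Cmap_fst, star_star]
    · rw [dif_neg h, Cmap_sub, star_star]

lemma Cmap_anti (x y : Hbig n) : ⟪Cmap x, Cmap y⟫ = ⟪y, x⟫ := by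
  have hsplit2 := pnat_tsum_split n (fun j : ℕ+ => ⟪y.ofLp.2.ofLp.2 j, x.ofLp.2.ofLp.2 j⟫)
    (fun j : {j : ℕ+ // j ≠ n} => ⟪y.ofLp.2.ofLp.2 j.1, x.ofLp.2.ofLp.2 j.1⟫)
    (by
      have h : Summable (fun j : ℕ+ => ⟪y.ofLp.2.ofLp.2 j, x.ofLp.2.ofLp.2 j⟫) :=
        lp.summable_inner _ _
      exact h.subtype {j | j ≠ n}) (fun j => rfl)
  have hsplit3 := pnat_tsum_split n (fun j : ℕ+ => ⟪beta n y j, beta n x j⟫)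
    (fun j : {j : ℕ+ // j ≠ n} => ⟪y.ofLp.2.ofLp.1 j, x.ofLp.2.ofLp.1 j⟫)
    (lp.summable_inner y.ofLp.2.ofLp.1 x.ofLp.2.ofLp.1) (fun j => by
      show ⟪beta n y j, beta n x j⟫ = ⟪y.ofLp.2.ofLp.1 j, x.ofLp.2.ofLp.1 j⟫
      rw [beta_ne, beta_ne])
  have e2 : ⟪(Cmap x).ofLp.2.ofLp.1, (Cmap y).ofLp.2.ofLp.1⟫ = ∑' j : {j : ℕ+ // j ≠ n}, ⟪y.ofLp.2.ofLp.2 j.1, x.ofLp.2.ofLp.2 j.1⟫ := by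
    rw [lp.inner_eq_tsum]
    exact tsum_congr fun j => by rw [Cmap_sub, Cmap_sub, innerJ2]
  have e3 : ⟪(Cmap x).ofLp.2.ofLp.2, (Cmap y).ofLp.2.ofLp.2⟫ = ∑' j : ℕ+, ⟪beta n y j, beta n x j⟫ := by
    rw [lp.inner_eq_tsum]
    exact tsum_congr fun j => by rw [Cmap_all, Cmap_all, innerJ2]
  rw [WithLp.prod_inner_apply, WithLp.prod_inner_apply, e2, e3, Cmap_fst, Cmap_fst, innerJ2,
    hsplit3]
  simp only [beta_n]
  rw [show ⟪y, x⟫ = ⟪y.ofLp.1, x.ofLp.1⟫ + (⟪y.ofLp.2.ofLp.1, x.ofLp.2.ofLp.1⟫ + ⟪y.ofLp.2.ofLp.2, x.ofLp.2.ofLp.2⟫) from by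
    rw [WithLp.prod_inner_apply, WithLp.prod_inner_apply],
    lp.inner_eq_tsum y.ofLp.2.ofLp.1 x.ofLp.2.ofLp.1, lp.inner_eq_tsum y.ofLp.2.ofLp.2 x.ofLp.2.ofLp.2, hsplit2]
  ring

lemma Cmap_norm (x : Hbig n) : ‖Cmap x‖ = ‖x‖ := by
  have h := Cmap_anti x x
  have h1 : ‖Cmap x‖ ^ 2 = ‖x‖ ^ 2 := by
    rw [← @inner_self_eq_norm_sq ℂ, ← @inner_self_eq_norm_sq ℂ, h]
  calc ‖Cmap x‖ = √(‖Cmap x‖ ^ 2) := (Real.sqrt_sq (norm_nonneg _)).symm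
    _ = √(‖x‖ ^ 2) := by rw [h1]
    _ = ‖x‖ := Real.sqrt_sq (norm_nonneg _)

lemma coeff_norm (j : ℕ+) : ‖((coeff j : ℝ) : ℂ)‖ ≤ 1 := by
  have h1 : (0:ℝ) ≤ coeff j := by unfold coeff; positivity
  have h2 : coeff j ≤ 1 := by
    unfold coeff
    rw [div_le_one (by positivity)]
    linarith
  rw [Complex.norm_real, Real.norm_eq_abs, abs_of_nonneg h1]
  exact h2

def F (S : ellTwo →L[ℂ] ellTwo) (x y : Hbig n) (j : ℕ+) : ℂ :=
  (coeff j : ℂ) * ⟪star (x.ofLp.2.ofLp.2 j), S (beta n y j)⟫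

lemma summable_F (S : ellTwo →L[ℂ] ellTwo) (x y : Hbig n) : Summable (F (n := n) S x y) := by
  have h1 : Summable fun j : ℕ+ => ‖(star (x.ofLp.2.ofLp.2 j) : ellTwo)‖ ^ 2 :=
    (summable_norm_sq x.ofLp.2.ofLp.2).congr fun j => by rw [norm_star]
  have h2 : Summable fun j : ℕ+ => ‖S (beta n y j)‖ ^ 2 := by
    refine ((summable_beta_sq y).mul_left (‖S‖ ^ 2)).of_nonneg_of_le
      (fun j => sq_nonneg _) fun j => ?_
    have h := S.le_opNorm (beta n y j)
    nlinarith [norm_nonneg (S (beta n y j)), S.opNorm_nonneg, norm_nonneg (beta n y j)]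
  have h3 := summable_inner_aux h1 h2
  refine Summable.of_norm_bounded h3.norm fun j => ?_
  rw [F, norm_mul]
  exact mul_le_of_le_one_left (norm_nonneg _) (coeff_norm j)

section WithTn

variable {S : ellTwo →L[ℂ] ellTwo}
  (hS : ∀ a : ellTwo, S a 0 = 0 ∧ ∀ m : ℕ, S a (m + 1) = a m)
  {Tn : Hbig n →L[ℂ] Hbig n}
  (hTn : ∀ x : Hbig n,
      (Tn x).ofLp.1 = (coeff n : ℂ) • S x.ofLp.1 ∧
      (∀ j : {j : ℕ+ // j ≠ n}, (Tn x).ofLp.2.ofLp.1 j = (coeff j : ℂ) • S (x.ofLp.2.ofLp.1 j)) ∧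
      (∀ j : ℕ+, (Tn x).ofLp.2.ofLp.2 j = (coeff j : ℂ) • ContinuousLinearMap.adjoint S (x.ofLp.2.ofLp.2 j)))

include hS hTn

lemma inner_C_Tn (x y : Hbig n) :
    ⟪Cmap x, Tn y⟫ = (∑' j : ℕ+, F S x y j) + ∑' j : ℕ+, F S y x j := by
  have hFxy := summable_F S x y
  have hsplit := pnat_tsum_split n (F S x y) (fun j : {j : ℕ+ // j ≠ n} => F S x y j.1)
    (hFxy.comp_injective Subtype.val_injective) (fun j => rfl)
  have e1 : ⟪(Cmap x).ofLp.1, (Tn y).ofLp.1⟫ = F S x y n := by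
    rw [Cmap_fst, (hTn y).1, inner_smul_right]
    show _ = (coeff n : ℂ) * ⟪star (x.ofLp.2.ofLp.2 n), S (beta n y n)⟫
    rw [beta_n]
  have e2 : ⟪(Cmap x).ofLp.2.ofLp.1, (Tn y).ofLp.2.ofLp.1⟫ = ∑' j : {j : ℕ+ // j ≠ n}, F S x y j.1 := by
    rw [lp.inner_eq_tsum]
    refine tsum_congr fun j => ?_
    rw [Cmap_sub, (hTn y).2.1 j, inner_smul_right]
    show _ = (coeff j.1 : ℂ) * ⟪star (x.ofLp.2.ofLp.2 j.1), S (beta n y j.1)⟫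
    rw [beta_ne]
  have e3 : ⟪(Cmap x).ofLp.2.ofLp.2, (Tn y).ofLp.2.ofLp.2⟫ = ∑' j : ℕ+, F S y x j := by
    rw [lp.inner_eq_tsum]
    refine tsum_congr fun j => ?_
    rw [Cmap_all, (hTn y).2.2 j, inner_smul_right, key_adj hS]
    rfl
  rw [WithLp.prod_inner_apply, WithLp.prod_inner_apply, e1, e2, e3, hsplit]
  ring

lemma sym_C_Tn (x y : Hbig n) : ⟪Cmap x, Tn y⟫ = ⟪Cmap y, Tn x⟫ := by
  rw [inner_C_Tn hS hTn, inner_C_Tn hS hTn, add_comm]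

lemma intertwine {T' : Htar →L[ℂ] Htar}
    (hT' : ∀ (y : Htar) (j : ℕ+),
      (T' y j).ofLp.1 = (coeff j : ℂ) • S ((y j).ofLp.1) ∧
      (T' y j).ofLp.2 = (coeff j : ℂ) • ContinuousLinearMap.adjoint S ((y j).ofLp.2))
    (x : Hbig n) : Umap n (Tn x) = T' (Umap n x) := by
  apply lp.ext
  funext j
  refine P_ext ?_ ?_
  · show beta n (Tn x) j = (T' (Umap n x) j).ofLp.1
    rw [(hT' (Umap n x) j).1]
    show beta n (Tn x) j = (coeff j : ℂ) • S (beta n x j)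
    unfold beta
    rcases eq_or_ne j n with h | h
    · subst h; rw [dif_pos rfl, dif_pos rfl, (hTn x).1]
    · rw [dif_neg h, dif_neg h, (hTn x).2.1 ⟨j, h⟩]
  · show (Tn x).ofLp.2.ofLp.2 j = (T' (Umap n x) j).ofLp.2
    rw [(hT' (Umap n x) j).2, (hTn x).2.2 j]
    rfl

end WithTn


end TnAux

set_option maxHeartbeats 1000000 in
set_option synthInstance.maxHeartbeats 1000000 in
/-- For `n ≥ 1`, the operator
`T_n = (n/(n+1)) S ⊕ (⊕_{j≥1, j≠n} (j/(j+1)) S) ⊕ (⊕_{j≥1} (j/(j+1)) S*)`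
on `ℓ²(ℕ) ⊕ (⊕_{j≠n} ℓ²(ℕ)) ⊕ (⊕_{j≥1} ℓ²(ℕ))` is unitarily equivalent to
`⊕_{j≥1} (j/(j+1)) (S ⊕ S*)`, and hence `T_n` is complex symmetric. -/
theorem tn_unitarilyEquiv_and_complexSymmetric
    (S : ellTwo →L[ℂ] ellTwo) (hS : IsUnilateralShift S) (n : ℕ+)
    -- the Hilbert space ℓ² ⊕ (⊕_{j≥1, j≠n} ℓ²) ⊕ (⊕_{j≥1} ℓ²) on which T_n acts:
    (Tn : WithLp 2 (ellTwo ×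
            WithLp 2 ((lp (fun _ : {j : ℕ+ // j ≠ n} => ellTwo) 2) ×
                      (lp (fun _ : ℕ+ => ellTwo) 2))) →L[ℂ]
          WithLp 2 (ellTwo ×
            WithLp 2 ((lp (fun _ : {j : ℕ+ // j ≠ n} => ellTwo) 2) ×
                      (lp (fun _ : ℕ+ => ellTwo) 2))))
    (hTn : ∀ x,
      (Tn x).ofLp.1 = (coeff n : ℂ) • S x.ofLp.1 ∧
      (∀ j : {j : ℕ+ // j ≠ n}, (Tn x).ofLp.2.ofLp.1 j = (coeff j : ℂ) • S (x.ofLp.2.ofLp.1 j)) ∧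
      (∀ j : ℕ+, (Tn x).ofLp.2.ofLp.2 j = (coeff j : ℂ) • ContinuousLinearMap.adjoint S (x.ofLp.2.ofLp.2 j)))
    -- the operator ⊕_{j≥1} (j/(j+1)) (S ⊕ S*) on ⊕_{j≥1} (ℓ² ⊕ ℓ²):
    (T' : lp (fun _ : ℕ+ => WithLp 2 (ellTwo × ellTwo)) 2 →L[ℂ]
          lp (fun _ : ℕ+ => WithLp 2 (ellTwo × ellTwo)) 2)
    (hT' : ∀ y (j : ℕ+),
      (T' y j).ofLp.1 = (coeff j : ℂ) • S ((y j).ofLp.1) ∧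
      (T' y j).ofLp.2 = (coeff j : ℂ) • ContinuousLinearMap.adjoint S ((y j).ofLp.2)) :
    (∃ U : (WithLp 2 (ellTwo ×
            WithLp 2 ((lp (fun _ : {j : ℕ+ // j ≠ n} => ellTwo) 2) ×
                      (lp (fun _ : ℕ+ => ellTwo) 2)))) ≃ₗᵢ[ℂ]
           (lp (fun _ : ℕ+ => WithLp 2 (ellTwo × ellTwo)) 2),
        ∀ x, U (Tn x) = T' (U x)) ∧
    IsComplexSymmetric Tn := by
  constructor
  · refine ⟨TnAux.Uiso n, fun x => ?_⟩
    exact TnAux.intertwine hS hTn hT' x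
  · refine ⟨TnAux.Cmap, ⟨TnAux.Cmap_add, TnAux.Cmap_smul, TnAux.Cmap_norm, TnAux.Cmap_invol⟩, ?_⟩
    exact TnAux.isCS_of_sym Tn TnAux.Cmap TnAux.Cmap_invol TnAux.Cmap_anti (TnAux.sym_C_Tn hS hTn)
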